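/- Let k/(l·m^x) be a rational greater than 1 with gcd(k, l·m^x) = 1 (k, l, m, x positive integers). Suppose there exists a positive integer n = ∏_{i=1}^{s} p_i^{k_i} such that n^x divides l·m^x, and: (1) k/(l·m^x) < I(x, p_i·n) for all 1 ≤ i ≤ s; (2) σ_x(n)·l·(m/n)^x has a divisor d^x (d a positive integer) with gcd(d^x, k) = 1 and I(x,d) ≥ σ_x(p_j^{k_j+1})/(σ_x(p_j^{k_j+1}) − 1) for some 1 ≤ j ≤ s. Then k/(l·m^x) is an x-th abundancy outlaw. -/
import Mathlib


open Finset Nat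

/-- Sum of x-th powers of divisors. -/
def sigmaX (x n : ℕ) : ℕ := ∑ d ∈ n.divisors, d ^ x

/-- The x-th abundancy index as a rational number. -/
def Iq (x n : ℕ) : ℚ := (sigmaX x n : ℚ) / (n : ℚ) ^ x

lemma sigmaX_eq (x n : ℕ) : sigmaX x n = ArithmeticFunction.sigma x n :=
  ArithmeticFunction.sigma_apply.symm

lemma sigmaX_mul (x : ℕ) {a b : ℕ} (h : Nat.Coprime a b) :
    sigmaX x (a * b) = sigmaX x a * sigmaX x b := by
  simp only [sigmaX_eq]
  exact ArithmeticFunction.isMultiplicative_sigma.map_mul_of_coprime h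

lemma sigmaX_pos (x : ℕ) {n : ℕ} (hn : 0 < n) : 0 < sigmaX x n := by
  apply Finset.sum_pos
  · intro i hi
    exact pow_pos (Nat.pos_of_mem_divisors hi) x
  · exact ⟨1, Nat.one_mem_divisors.2 hn.ne'⟩

lemma sigmaX_mul_le (x : ℕ) {b c : ℕ} (hb : 0 < b) (hc : 0 < c) :
    sigmaX x b * c ^ x ≤ sigmaX x (b * c) := by
  unfold sigmaX
  rw [Finset.sum_mul]
  have h1 : ∑ d ∈ b.divisors, d ^ x * c ^ x
      = ∑ d ∈ b.divisors.image (· * c), d ^ x := by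
    rw [Finset.sum_image (fun a _ a' _ h => Nat.eq_of_mul_eq_mul_right hc h)]
    simp [mul_pow]
  rw [h1]
  apply Finset.sum_le_sum_of_subset
  intro d hd
  simp only [Finset.mem_image] at hd
  obtain ⟨d', hd', rfl⟩ := hd
  exact Nat.mem_divisors.2 ⟨mul_dvd_mul (Nat.mem_divisors.1 hd').1 dvd_rfl,
    (Nat.mul_pos hb hc).ne'⟩

lemma Iq_le_of_dvd (x : ℕ) {a b : ℕ} (hb : 0 < b) (hab : a ∣ b) :
    Iq x a ≤ Iq x b := by
  obtain ⟨c, rfl⟩ := hab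
  have ha : 0 < a := by by_contra h; simp [Nat.le_zero.mp (not_lt.mp h)] at hb
  have hc : 0 < c := by by_contra h; simp [Nat.le_zero.mp (not_lt.mp h)] at hb
  have key := sigmaX_mul_le x ha hc
  unfold Iq
  rw [div_le_div_iff₀ (by positivity) (by positivity)]
  push_cast
  have : (sigmaX x a : ℚ) * c ^ x ≤ (sigmaX x (a * c) : ℚ) := by exact_mod_cast key
  have hax : (0:ℚ) < (a:ℚ) ^ x := by positivity
  calc (sigmaX x a : ℚ) * ((a:ℚ) * c) ^ x = ((sigmaX x a : ℚ) * (c:ℚ) ^ x) * (a:ℚ) ^ x := by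
        rw [mul_pow]; ring
    _ ≤ (sigmaX x (a * c) : ℚ) * (a:ℚ) ^ x := by
        apply mul_le_mul_of_nonneg_right this hax.le

lemma Iq_mul (x : ℕ) {a b : ℕ} (h : Nat.Coprime a b) :
    Iq x (a * b) = Iq x a * Iq x b := by
  unfold Iq
  rw [sigmaX_mul x h]
  push_cast
  rw [mul_pow]
  ring

theorem stmt_14 (x k l m s : ℕ) (hx : 0 < x) (hk : 0 < k) (hl : 0 < l) (hm : 0 < m)
    (hs : 0 < s)
    (hgt : (1 : ℚ) < (k : ℚ) / ((l : ℚ) * (m : ℚ) ^ x))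
    (hcop : Nat.gcd k (l * m ^ x) = 1)
    (p : Fin s → ℕ) (e : Fin s → ℕ)
    (hp : ∀ i, (p i).Prime) (hinj : Function.Injective p) (he : ∀ i, 0 < e i)
    (n : ℕ) (hn : n = ∏ i, p i ^ e i)
    (hndvd : n ^ x ∣ l * m ^ x) (hnm : n ∣ m)
    (h1 : ∀ i, (k : ℚ) / ((l : ℚ) * (m : ℚ) ^ x) < Iq x (p i * n))
    (d : ℕ) (hd : 0 < d)
    (hddvd : d ^ x ∣ sigmaX x n * l * (m / n) ^ x)
    (hdk : Nat.gcd (d ^ x) k = 1)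
    (j : Fin s)
    (hId : Iq x d ≥ (sigmaX x (p j ^ (e j + 1)) : ℚ) / ((sigmaX x (p j ^ (e j + 1)) : ℚ) - 1)) :
    ¬ ∃ a : ℕ, 0 < a ∧ Iq x a = (k : ℚ) / ((l : ℚ) * (m : ℚ) ^ x) := by
  rintro ⟨a, ha, hIa⟩
  have hn0 : 0 < n := by
    rw [hn]; exact Finset.prod_pos fun i _ => pow_pos (hp i).pos _
  -- key Nat equation
  have key : sigmaX x a * (l * m ^ x) = k * a ^ x := by
    have hIa' : (sigmaX x a : ℚ) / (a : ℚ) ^ x = (k : ℚ) / ((l : ℚ) * (m : ℚ) ^ x) := hIa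
    rw [div_eq_div_iff (by positivity) (by positivity)] at hIa'
    exact_mod_cast hIa'
  have hlmdvd : l * m ^ x ∣ a ^ x := by
    have h3 : l * m ^ x ∣ a ^ x * k :=
      ⟨sigmaX x a, by rw [show a ^ x * k = k * a ^ x from mul_comm _ _, ← key]; ring⟩
    exact (Nat.Coprime.dvd_of_dvd_mul_right (Nat.coprime_comm.mp hcop) h3)
  have hna : n ∣ a := (Nat.pow_dvd_pow_iff hx.ne').mp (dvd_trans hndvd hlmdvd)
  obtain ⟨t, hat⟩ := hna
  have ht : 0 < t := by
    rcases Nat.eq_zero_or_pos t with h | h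
    · rw [h, mul_zero] at hat; omega
    · exact h
  -- no p i divides t
  have hpt : ∀ i, ¬ p i ∣ t := by
    intro i hpi
    obtain ⟨u, hu⟩ := hpi
    have hdvd : p i * n ∣ a := ⟨u, by rw [hat, hu]; ring⟩
    have h4 := Iq_le_of_dvd x ha hdvd
    have h5 := h1 i
    rw [← hIa] at h5
    linarith
  have hnt : Nat.Coprime n t := by
    rw [hn]
    apply Nat.Coprime.prod_left
    intro i _
    exact Nat.Coprime.pow_left _ (((hp i).coprime_iff_not_dvd).mpr (hpt i))
  obtain ⟨w, hmw⟩ := hnm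
  have hmn : m / n = w := by rw [hmw, Nat.mul_div_cancel_left _ hn0]
  have key2 : sigmaX x n * l * w ^ x * sigmaX x t = k * t ^ x := by
    have e1 : sigmaX x a = sigmaX x n * sigmaX x t := by rw [hat]; exact sigmaX_mul x hnt
    have h6 : n ^ x * (sigmaX x n * l * w ^ x * sigmaX x t) = n ^ x * (k * t ^ x) := by
      have lhs : n ^ x * (sigmaX x n * l * w ^ x * sigmaX x t) = sigmaX x a * (l * m ^ x) := by
        rw [e1, hmw, mul_pow]; ring
      have rhs : n ^ x * (k * t ^ x) = k * a ^ x := by rw [hat, mul_pow]; ring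
      rw [lhs, rhs, key]
    exact Nat.eq_of_mul_eq_mul_left (pow_pos hn0 x) h6
  have hM : d ^ x ∣ t ^ x * k := by
    have h7 : d ^ x ∣ sigmaX x n * l * w ^ x * sigmaX x t :=
      Dvd.dvd.mul_right (hmn ▸ hddvd) _
    rw [key2] at h7
    rwa [mul_comm] at h7
  have hdt : d ∣ t :=
    (Nat.pow_dvd_pow_iff hx.ne').mp (Nat.Coprime.dvd_of_dvd_mul_right hdk hM)
  have hIdt : Iq x d ≤ Iq x t := Iq_le_of_dvd x ht hdt
  -- prime power decomposition at j
  set P := p j with hPdef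
  set E := e j with hEdef
  set r := ∏ i ∈ Finset.univ.erase j, p i ^ e i with hrdef
  have hnr : n = P ^ E * r := by
    rw [hn, ← Finset.mul_prod_erase Finset.univ _ (Finset.mem_univ j)]
  have hPr : Nat.Coprime P r := by
    apply Nat.Coprime.prod_right
    intro i hi
    apply Nat.Coprime.pow_right
    rw [(hp j).coprime_iff_not_dvd]
    intro hdvd
    have : P = p i := ((Nat.prime_dvd_prime_iff_eq (hp j) (hp i)).mp hdvd)
    exact (Finset.ne_of_mem_erase hi) (hinj this.symm)
  have hgeom : ∀ E' : ℕ, sigmaX x (P ^ E') = ∑ i ∈ Finset.range (E' + 1), (P ^ x) ^ i := by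
    intro E'
    rw [sigmaX, Nat.sum_divisors_prime_pow (hp j)]
    exact Finset.sum_congr rfl fun i _ => (pow_right_comm P i x)
  have hS : sigmaX x (P ^ (E + 1)) = P ^ x * sigmaX x (P ^ E) + 1 := by
    rw [hgeom, hgeom]
    exact geom_sum_succ
  have hσE : 0 < sigmaX x (P ^ E) := sigmaX_pos x (pow_pos (hp j).pos E)
  have hr0 : 0 < r := Finset.prod_pos fun i _ => pow_pos (hp i).pos _
  -- rational quantities
  have hAq : (0 : ℚ) < (P : ℚ) ^ x := by
    have := (hp j).pos; positivity
  have hσEq : (0 : ℚ) < (sigmaX x (P ^ E) : ℚ) := by exact_mod_cast hσE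
  have hSq : (sigmaX x (P ^ (E + 1)) : ℚ) = (P : ℚ) ^ x * (sigmaX x (P ^ E) : ℚ) + 1 := by
    exact_mod_cast hS
  have hS1 : (sigmaX x (P ^ (E + 1)) : ℚ) - 1 = (P : ℚ) ^ x * (sigmaX x (P ^ E) : ℚ) := by
    rw [hSq]; ring
  have claim : Iq x (P ^ E) * ((sigmaX x (P ^ (E + 1)) : ℚ) / ((sigmaX x (P ^ (E + 1)) : ℚ) - 1))
      = Iq x (P ^ (E + 1)) := by
    unfold Iq
    rw [hS1]
    push_cast
    rw [show ((P : ℚ) ^ E) ^ x = ((P : ℚ) ^ x) ^ E by rw [← pow_mul, ← pow_mul, mul_comm],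
      show ((P : ℚ) ^ (E + 1)) ^ x = ((P : ℚ) ^ x) ^ (E + 1) by rw [← pow_mul, ← pow_mul, mul_comm]]
    rw [pow_succ]
    field_simp
    ring
  have hcoprE : Nat.Coprime (P ^ E) r := hPr.pow_left _
  have hcoprE1 : Nat.Coprime (P ^ (E + 1)) r := hPr.pow_left _
  have iqn : Iq x n = Iq x (P ^ E) * Iq x r := by rw [hnr]; exact Iq_mul x hcoprE
  have iqpn : Iq x (P * n) = Iq x (P ^ (E + 1)) * Iq x r := by
    rw [show P * n = P ^ (E + 1) * r by rw [hnr, pow_succ]; ring]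
    exact Iq_mul x hcoprE1
  have iqa : Iq x a = Iq x n * Iq x t := by rw [hat]; exact Iq_mul x hnt
  have hIqn : (0 : ℚ) ≤ Iq x n := by unfold Iq; positivity
  have hIqr : (0 : ℚ) ≤ Iq x r := by unfold Iq; positivity
  -- final chain
  have hfrac : (sigmaX x (P ^ (E + 1)) : ℚ) / ((sigmaX x (P ^ (E + 1)) : ℚ) - 1) ≤ Iq x t :=
    le_trans hId hIdt
  have hchain : Iq x (P * n) ≤ Iq x a := by
    calc Iq x (P * n) = Iq x n * ((sigmaX x (P ^ (E + 1)) : ℚ)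
          / ((sigmaX x (P ^ (E + 1)) : ℚ) - 1)) := by
          rw [iqpn, iqn, ← claim]; ring
      _ ≤ Iq x n * Iq x t := mul_le_mul_of_nonneg_left hfrac hIqn
      _ = Iq x a := iqa.symm
  have := h1 j
  rw [← hIa] at this
  exact absurd hchain (not_le.mpr this)
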